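/- arXiv:2210.10193 — 3 statements merged into one kernel-verified Lean document; each statement's English description precedes it below -/
import Mathlib

section
/- For every λ > 0 and every sequence a : ℤ → ℝ, the modulo map commutes with the first-order finite difference in the following sense: 𝓜_λ((Δ(𝓜_λ ∘ a))[k]) = 𝓜_λ((Δa)[k]) for all k ∈ ℤ. -/
/-- The centered modulo map `𝓜_λ(r) = 2λ(⟦r/(2λ) + 1/2⟧ − 1/2)`,
where `⟦x⟧ = x − ⌊x⌋` is the fractional part. -/
noncomputable def centeredModulo (lam r : ℝ) : ℝ :=
  2 * lam * (Int.fract (r / (2 * lam) + 1 / 2) - 1 / 2)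

/-- First-order finite difference: `(Δa)[k] = a[k+1] − a[k]`. -/
def fdiff (a : ℤ → ℝ) : ℤ → ℝ := fun k => a (k + 1) - a k

lemma centeredModulo_sub (lam : ℝ) (hlam : 0 < lam) (r : ℝ) :
    ∃ n : ℤ, centeredModulo lam r = r - 2 * lam * n := by
  refine ⟨⌊r / (2 * lam) + 1 / 2⌋, ?_⟩
  unfold centeredModulo
  rw [Int.fract]
  have h : (2 : ℝ) * lam ≠ 0 := by positivity
  field_simp
  ring

lemma centeredModulo_add_int (lam : ℝ) (hlam : 0 < lam) (r : ℝ) (n : ℤ) :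
    centeredModulo lam (r + 2 * lam * n) = centeredModulo lam r := by
  unfold centeredModulo
  have h : (2 : ℝ) * lam ≠ 0 := by positivity
  have : (r + 2 * lam * n) / (2 * lam) + 1 / 2 = (r / (2 * lam) + 1 / 2) + n := by
    field_simp; ring
  rw [this, Int.fract_add_intCast]

theorem centeredModulo_comm_fdiff (lam : ℝ) (hlam : 0 < lam) (a : ℤ → ℝ) (k : ℤ) :
    centeredModulo lam (fdiff (fun j => centeredModulo lam (a j)) k) =
      centeredModulo lam (fdiff a k) := by
  obtain ⟨m, hm⟩ := centeredModulo_sub lam hlam (a (k + 1))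
  obtain ⟨n, hn⟩ := centeredModulo_sub lam hlam (a k)
  have : fdiff (fun j => centeredModulo lam (a j)) k =
      fdiff a k + 2 * lam * ((n : ℤ) - m : ℤ) := by
    simp only [fdiff, hm, hn]
    push_cast
    ring
  rw [this, centeredModulo_add_int lam hlam]
end

section
/- Let λ > 0, L ∈ ℕ with L ≥ 1, and let a : ℤ → ℝ be a sequence such that (Δ^L a)[k] ∈ [−λ, λ) for every k ∈ ℤ. Then the L-th order differences of a can be recovered exactly from the modulo-folded sequence: (Δ^L a)[k] = 𝓜_λ((Δ^L(𝓜_λ ∘ a))[k]) for all k ∈ ℤ. -/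
private lemma cm_sub_self (lam r : ℝ) (hlam : 0 < lam) :
    r - centeredModulo lam r = 2 * lam * ⌊r / (2 * lam) + 1 / 2⌋ := by
  have h2 : (2 : ℝ) * lam ≠ 0 := by positivity
  unfold centeredModulo
  rw [Int.fract]
  field_simp
  ring

private lemma cm_sub_int (lam r : ℝ) (n : ℤ) (hlam : 0 < lam) :
    centeredModulo lam (r - 2 * lam * n) = centeredModulo lam r := by
  have h2 : (2 : ℝ) * lam ≠ 0 := by positivity
  unfold centeredModulo
  have : (r - 2 * lam * n) / (2 * lam) + 1 / 2 = (r / (2 * lam) + 1 / 2) + (-n : ℤ) := by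
    push_cast; field_simp; ring
  rw [this, Int.fract_add_intCast]

private lemma cm_of_mem (lam r : ℝ) (hlam : 0 < lam) (h : r ∈ Set.Ico (-lam) lam) :
    centeredModulo lam r = r := by
  have h2 : (0 : ℝ) < 2 * lam := by positivity
  have hr1 : -(1/2 : ℝ) ≤ r / (2 * lam) := by
    rw [le_div_iff₀ h2]; nlinarith [h.1]
  have hr2 : r / (2 * lam) < 1/2 := by
    rw [div_lt_iff₀ h2]; nlinarith [h.2]
  have hx0 : (0 : ℝ) ≤ r / (2 * lam) + 1 / 2 := by linarith
  have hx1 : r / (2 * lam) + 1 / 2 < 1 := by linarith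
  unfold centeredModulo
  rw [Int.fract_eq_self.2 ⟨hx0, by linarith⟩]
  field_simp
  ring

private lemma fdiff_iter_sub (L : ℕ) (a b : ℤ → ℝ) (k : ℤ) :
    fdiff^[L] (fun j => a j - b j) k = fdiff^[L] a k - fdiff^[L] b k := by
  induction L generalizing a b k with
  | zero => simp
  | succ n ih =>
    rw [Function.iterate_succ_apply, Function.iterate_succ_apply,
      Function.iterate_succ_apply]
    have : fdiff (fun j => a j - b j) = fun j => fdiff a j - fdiff b j := by
      funext j; simp [fdiff]; ring
    rw [this, ih]

private lemma fdiff_iter_mem (S : AddSubgroup ℝ) (L : ℕ) (c : ℤ → ℝ)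
    (h : ∀ j, c j ∈ S) : ∀ k, fdiff^[L] c k ∈ S := by
  induction L generalizing c with
  | zero => simpa using h
  | succ n ih =>
    intro k
    rw [Function.iterate_succ_apply]
    exact ih _ (fun j => S.sub_mem (h _) (h _)) k

theorem fdiff_iterate_recovery_from_modulo (lam : ℝ) (hlam : 0 < lam)
    (L : ℕ) (hL : 1 ≤ L) (a : ℤ → ℝ)
    (hbound : ∀ k : ℤ, fdiff^[L] a k ∈ Set.Ico (-lam) lam) :
    ∀ k : ℤ, fdiff^[L] a k =
      centeredModulo lam (fdiff^[L] (fun j => centeredModulo lam (a j)) k) := by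
  intro k
  set b : ℤ → ℝ := fun j => centeredModulo lam (a j) with hb
  have hmem : ∀ j, a j - b j ∈ AddSubgroup.zmultiples (2 * lam) := by
    intro j
    rw [hb, cm_sub_self lam (a j) hlam]
    exact ⟨⌊a j / (2 * lam) + 1 / 2⌋, by push_cast [zsmul_eq_mul]; ring⟩
  have hd : fdiff^[L] (fun j => a j - b j) k ∈ AddSubgroup.zmultiples (2 * lam) :=
    fdiff_iter_mem _ L _ hmem k
  obtain ⟨n, hn⟩ := hd
  rw [fdiff_iter_sub] at hn
  simp only [zsmul_eq_mul] at hn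
  have : fdiff^[L] b k = fdiff^[L] a k - 2 * lam * n := by linarith
  rw [this, cm_sub_int lam _ n hlam, cm_of_mem lam _ hlam (hbound k)]
end

section
/- (SQNR gain of the modulo ADC for a uniform source) Let λ > 0, let N be a positive integer, set β = Nλ and ζ = λ/β = 1/N, let b ∈ ℕ with b ≥ 1, and let X be uniformly distributed on [−β, β). Then the mean squared quantization error of the modulo ADC, which applies the b-bit midrise quantizer of range [−λ, λ) to the folded sample 𝓜_λ(X), satisfies E[(𝓜_λ(X) − 𝒬_{b,λ}(𝓜_λ(X)))²] = (λ²/3)·2^{−2b} = ζ² · (β²/3)·2^{−2b}; consequently the signal-to-quantization-noise ratio satisfies Var(X)/E[(𝓜_λ(X) − 𝒬_{b,λ}(𝓜_λ(X)))²] = 2^{2b}/ζ², i.e. the modulo ADC improves the SQNR of a conventional b-bit ADC of matched range [−β, β) by the factor 1/ζ². -/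
open MeasureTheory

/-- The `b`-bit midrise quantizer of range `[−λ, λ)`, with step size `q₀ = 2λ/2^b`:
`𝒬_{b,λ}(x) = q₀·(⌊x/q₀⌋ + 1/2)`. -/
noncomputable def midriseQ (b : ℕ) (lam x : ℝ) : ℝ :=
  (2 * lam / 2 ^ b) * (⌊x / (2 * lam / 2 ^ b)⌋ + 1 / 2)

/-- SQNR gain of the modulo ADC for a uniform source. -/
theorem modulo_adc_sqnr_gain_uniform {Ωs : Type*} [MeasurableSpace Ωs]
    (ℙ : Measure Ωs) [IsProbabilityMeasure ℙ]
    (lam β ζ : ℝ) (hlam : 0 < lam) (N : ℕ) (hN : 0 < N)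
    (hβ : β = N * lam) (hζ : ζ = lam / β)
    (b : ℕ) (hb : 1 ≤ b)
    (X : Ωs → ℝ) (hX : pdf.IsUniform X (Set.Ico (-β) β) ℙ) :
    (∫ ω, (centeredModulo lam (X ω) - midriseQ b lam (centeredModulo lam (X ω))) ^ 2 ∂ℙ)
        = lam ^ 2 / 3 * ((2 : ℝ) ^ (2 * b))⁻¹ ∧
    (∫ ω, (centeredModulo lam (X ω) - midriseQ b lam (centeredModulo lam (X ω))) ^ 2 ∂ℙ)
        = ζ ^ 2 * (β ^ 2 / 3 * ((2 : ℝ) ^ (2 * b))⁻¹) ∧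
    (β ^ 2 / 3) /
        (∫ ω, (centeredModulo lam (X ω) - midriseQ b lam (centeredModulo lam (X ω))) ^ 2 ∂ℙ)
        = (2 : ℝ) ^ (2 * b) / ζ ^ 2 := by
  have hNR : (0 : ℝ) < N := by exact_mod_cast hN
  have hβpos : 0 < β := by rw [hβ]; exact mul_pos hNR hlam
  have h2b : (0:ℝ) < 2 ^ b := by positivity
  set q : ℝ := 2 * lam / 2 ^ b with hq
  have hqpos : 0 < q := by positivity
  set F : ℝ → ℝ := fun x => (q * (Int.fract (x / q) - 1/2)) ^ 2 with hF
  -- pointwise identity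
  have hpt : ∀ x : ℝ,
      (centeredModulo lam x - midriseQ b lam (centeredModulo lam x)) ^ 2 = F x := by
    intro x
    have h1 : centeredModulo lam x - midriseQ b lam (centeredModulo lam x)
        = q * (Int.fract (centeredModulo lam x / q) - 1/2) := by
      rw [Int.fract, midriseQ, ← hq]
      field_simp
      ring
    have h2 : Int.fract (centeredModulo lam x / q) = Int.fract (x / q) := by
      have key : centeredModulo lam x / q
          = x / q + ((-(2 ^ b * ⌊x / (2 * lam) + 1/2⌋) : ℤ) : ℝ) := by
        rw [centeredModulo, Int.fract, hq]
        push_cast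
        field_simp
        ring
      rw [key, Int.fract_add_intCast]
    rw [h1, h2]
  -- measurability
  have hFmeas : Measurable F := by
    apply Measurable.pow_const
    exact (measurable_const.mul
      (((measurable_id.div_const q).fract).sub measurable_const))
  -- periodicity
  have hper : Function.Periodic F q := by
    intro x
    simp only [hF]
    have h : (x + q)/q = x/q + 1 := by field_simp
    rw [h, Int.fract_add_one]
  -- integrability
  have hFint : ∀ t₁ t₂ : ℝ, IntervalIntegrable F volume t₁ t₂ := by
    intro t₁ t₂
    apply (intervalIntegrable_const (c := q ^ 2)).mono_fun' hFmeas.aestronglyMeasurable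
    filter_upwards with x
    rw [Real.norm_eq_abs, abs_of_nonneg (sq_nonneg _)]
    have h0 := Int.fract_nonneg (x/q)
    have h1 := (Int.fract_lt_one (x/q)).le
    have hfr : (Int.fract (x/q) - 1/2) ^ 2 ≤ 1 := by nlinarith
    calc (q * (Int.fract (x/q) - 1/2)) ^ 2 = q ^ 2 * (Int.fract (x/q) - 1/2) ^ 2 := by ring
      _ ≤ q ^ 2 * 1 := by
          exact mul_le_mul_of_nonneg_left hfr (sq_nonneg q)
      _ = q ^ 2 := by ring
  -- integral over one period
  have hone : ∫ x in (0:ℝ)..q, F x = q ^ 3 / 12 := by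
    have hsing : ∀ᵐ x : ℝ, x ≠ q := by
      rw [ae_iff]
      have : {x : ℝ | ¬ x ≠ q} = {q} := by ext x; simp
      rw [this]
      exact measure_singleton q
    have hae : ∀ᵐ x : ℝ, x ∈ Set.uIoc (0:ℝ) q → F x = (x - q/2) ^ 2 := by
      filter_upwards [hsing] with x hx hmem
      rw [Set.uIoc_of_le hqpos.le] at hmem
      have hxq : x < q := lt_of_le_of_ne hmem.2 hx
      have hfr : Int.fract (x/q) = x/q := Int.fract_eq_self.mpr
        ⟨div_nonneg hmem.1.le hqpos.le, by rw [div_lt_one hqpos]; exact hxq⟩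
      simp only [hF, hfr]
      field_simp
    rw [intervalIntegral.integral_congr_ae hae,
      intervalIntegral.integral_comp_sub_right (fun x => x ^ 2) (q/2),
      integral_pow]
    norm_num
    ring
  -- integral over the full range
  set n : ℤ := (N : ℤ) * 2 ^ b with hn
  have hnq : -β + n • q = β := by
    rw [zsmul_eq_mul, hn, hq, hβ]
    push_cast
    field_simp
    ring
  have hset : ∫ x in Set.Ico (-β) β, F x = (N : ℝ) * 2 ^ b * (q ^ 3 / 12) := by
    have hstep : ∫ x in (-β)..β, F x = ∫ x in (-β)..(-β + n • q), F x := by rw [hnq]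
    rw [setIntegral_congr_set MeasureTheory.Ico_ae_eq_Ioc,
      ← intervalIntegral.integral_of_le (by linarith : -β ≤ β), hstep,
      hper.intervalIntegral_add_zsmul_eq n (-β) hFint,
      hper.intervalIntegral_add_eq (-β) 0, zero_add, hone]
    rw [zsmul_eq_mul, hn]
    push_cast
    ring
  -- volume
  have hvol : volume (Set.Ico (-β) β) = ENNReal.ofReal (2 * β) := by
    rw [Real.volume_Ico]
    congr 1
    ring
  have hns : volume (Set.Ico (-β) β) ≠ 0 := by
    rw [hvol]
    simp only [ne_eq, ENNReal.ofReal_eq_zero, not_le]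
    linarith
  have hnt : volume (Set.Ico (-β) β) ≠ ⊤ := by rw [hvol]; exact ENNReal.ofReal_ne_top
  have hXm : AEMeasurable X ℙ := hX.aemeasurable hns hnt
  have h2bb : (2:ℝ) ^ (2 * b) = ((2:ℝ) ^ b) ^ 2 := by rw [mul_comm, pow_mul]
  have hI : (∫ ω, (centeredModulo lam (X ω) - midriseQ b lam (centeredModulo lam (X ω))) ^ 2 ∂ℙ)
      = lam ^ 2 / 3 * ((2 : ℝ) ^ (2 * b))⁻¹ := by
    have hmap : ℙ.map X = (volume (Set.Ico (-β) β))⁻¹ • volume.restrict (Set.Ico (-β) β) := hX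
    calc (∫ ω, (centeredModulo lam (X ω) - midriseQ b lam (centeredModulo lam (X ω))) ^ 2 ∂ℙ)
        = ∫ ω, F (X ω) ∂ℙ := by simp only [hpt]
      _ = ∫ y, F y ∂(ℙ.map X) := (integral_map hXm hFmeas.aestronglyMeasurable).symm
      _ = (volume (Set.Ico (-β) β))⁻¹.toReal • ∫ y in Set.Ico (-β) β, F y := by
          rw [hmap, integral_smul_measure]
      _ = (2 * β)⁻¹ * ((N : ℝ) * 2 ^ b * (q ^ 3 / 12)) := by
          rw [hset, hvol, ← ENNReal.ofReal_inv_of_pos (by linarith),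
            ENNReal.toReal_ofReal (by positivity), smul_eq_mul]
      _ = lam ^ 2 / 3 * ((2 : ℝ) ^ (2 * b))⁻¹ := by
          rw [h2bb, hq, hβ]
          field_simp
          ring
  have hζval : ζ = 1 / N := by rw [hζ, hβ]; field_simp
  have hζne : ζ ≠ 0 := by rw [hζval]; positivity
  have hβne : β ≠ 0 := hβpos.ne'
  refine ⟨hI, ?_, ?_⟩
  · rw [hI, hζ]
    field_simp <;> ring
  · rw [hI, hζ, h2bb]
    field_simp
    try ring
    try rw [mul_comm]
end
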